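/- Let $x_1,\dots,x_n$ be positive integers with $\sum x_i = (n/3) \cdot S$ and let $T$ be the tree consisting of a root path $p_1\cdots p_S$ together with, for each $i$, a pendant path of $x_i$ vertices attached at $p_S$. If the multiset $\{x_i\}$ can be partitioned into $n/3$ sets each summing to $S$, then $T$ admits a partition of its vertex set into blocks of size at most $S$ such that every root-to-leaf path intersects at most $2$ blocks. -/

import Mathlib

/-! Model of rooted trees, memory layouts into blocks, and the
worst-case root-to-leaf I/O cost `layoutCost t B k` (minimum over
layouts with at most `B` vertices per nonzero block and at most `k`
vertices in the free block `0`, of the maximum over root-to-leaf paths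
of the number of distinct nonzero blocks on the path).
Vertices are addressed by their list of child indices from the root. -/

inductive RTree : Type where
  | node : List RTree → RTree

namespace RTree

mutual
  /-- Addresses of all vertices of the tree. The root has address `[]`. -/
  def verts : RTree → List (List ℕ)
    | .node ts => [] :: vertsAux 0 ts
  def vertsAux : ℕ → List RTree → List (List ℕ)
    | _, [] => []
    | i, t :: ts => (t.verts.map (i :: ·)) ++ vertsAux (i + 1) ts
end

mutual
  /-- Addresses of all leaves; a root-to-leaf path consists of all
  prefixes (`List.inits`) of a leaf address. -/
  def paths : RTree → List (List ℕ)
    | .node [] => [[]]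
    | .node (t :: ts) => pathsAux 0 (t :: ts)
  def pathsAux : ℕ → List RTree → List (List ℕ)
    | _, [] => []
    | i, t :: ts => (t.paths.map (i :: ·)) ++ pathsAux (i + 1) ts
end

end RTree

/-- Number of vertices of `t` that layout `L` assigns to block `b`. -/
def blockCount (t : RTree) (L : List ℕ → ℕ) (b : ℕ) : ℕ :=
  (t.verts.filter (fun v => L v = b)).length

/-- `L` is a valid layout of `t` with block size `B` and at most `k`
vertices in the free block `0`. -/
def okLayout (t : RTree) (B k : ℕ) (L : List ℕ → ℕ) : Prop :=
  (∀ v ∈ t.verts, L v ≤ t.verts.length) ∧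
  (∀ b : ℕ, b ≠ 0 → blockCount t L b ≤ B) ∧
  blockCount t L 0 ≤ k

/-- Cost of the root-to-leaf path ending at leaf address `p`: the number
of distinct nonzero blocks among the vertices on the path. -/
def pathCost (L : List ℕ → ℕ) (p : List ℕ) : ℕ :=
  (((p.inits.map L).dedup).filter (fun b => b ≠ 0)).length

/-- Worst-case cost of layout `L` on tree `t`. -/
def maxCost (t : RTree) (L : List ℕ → ℕ) : ℕ :=
  (t.paths.map (pathCost L)).foldr max 0

/-- `c(T,k)`: worst-case optimal I/O cost of `t` with block size `B` and
`k` free slots in block `0`. -/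
noncomputable def layoutCost (t : RTree) (B k : ℕ) : ℕ :=
  sInf {m : ℕ | ∃ L : List ℕ → ℕ, okLayout t B k L ∧ maxCost t L = m}

/-- A path (chain) of `n+1` vertices whose bottom vertex has children `ts`. -/
def chain : ℕ → List RTree → RTree
  | 0, ts => .node ts
  | n + 1, ts => .node [chain n ts]

/-- The reduction tree: a root path `p₁ ⋯ p_S` of `S` vertices with, for
each `x ∈ xs`, a pendant path of `x` vertices attached at `p_S`. -/
def hardTree (S : ℕ) (xs : List ℕ) : RTree :=
  chain (S - 1) (xs.map fun x => chain (x - 1) [])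


section Aux

/-- Weighted sum of entries of `l` (indexed from `i`) whose index satisfies `q`. -/
def wsum (q : ℕ → Bool) : ℕ → List ℕ → ℕ
  | _, [] => 0
  | i, a :: l => (if q i then a else 0) + wsum q (i+1) l

lemma wsum_congr {q q' : ℕ → Bool} : ∀ (l : List ℕ) (i : ℕ),
    (∀ k, i ≤ k → q k = q' k) → wsum q i l = wsum q' i l
  | [], _, _ => rfl
  | a :: l, i, h => by
    simp only [wsum, h i le_rfl, wsum_congr l (i+1) (fun k hk => h k (by omega))]

lemma wsum_false {q : ℕ → Bool} (hq : ∀ k, q k = false) :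
    ∀ (l : List ℕ) (i : ℕ), wsum q i l = 0
  | [], _ => rfl
  | a :: l, i => by simp [wsum, hq i, wsum_false hq l (i+1)]

lemma flatten_set_erase : ∀ (Ys : List (List ℕ)) (n : ℕ) (Y : List ℕ) (x : ℕ),
    Ys[n]? = some Y → x ∈ Y →
    Ys.flatten.Perm (x :: (Ys.set n (Y.erase x)).flatten)
  | [], n, Y, x, h, _ => by simp at h
  | Z :: Ys, 0, Y, x, h, hx => by
    simp only [List.getElem?_cons_zero, Option.some.injEq] at h
    subst h
    simpa using ((List.perm_cons_erase hx).append_right Ys.flatten)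
  | Z :: Ys, n+1, Y, x, h, hx => by
    simp only [List.getElem?_cons_succ] at h
    have ih := flatten_set_erase Ys n Y x h hx
    simp only [List.set_cons_succ, List.flatten_cons]
    exact (ih.append_left Z).trans List.perm_middle

lemma partA : ∀ (xs : List ℕ) (Ys : List (List ℕ)), Ys.flatten.Perm xs → ∀ i : ℕ,
    ∃ g : ℕ → ℕ, ∀ j, wsum (fun k => decide (g k = j)) i xs ≤ (Ys.getD j []).sum
  | [], Ys, _, i => ⟨fun _ => 0, fun j => by simp [wsum]⟩
  | x :: xs, Ys, hperm, i => by
    have hx : x ∈ Ys.flatten := hperm.mem_iff.mpr (List.mem_cons_self (a := x) (l := xs))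
    obtain ⟨Y, hY, hxY⟩ := List.mem_flatten.mp hx
    obtain ⟨n₀, hn₀lt, hn₀⟩ := List.getElem_of_mem hY
    have hsome : Ys[n₀]? = some Y := by rw [List.getElem?_eq_getElem hn₀lt, hn₀]
    have hfp := flatten_set_erase Ys n₀ Y x hsome hxY
    have hperm' : (Ys.set n₀ (Y.erase x)).flatten.Perm xs :=
      (hfp.symm.trans hperm).cons_inv
    obtain ⟨g', hg'⟩ := partA xs _ hperm' (i+1)
    refine ⟨fun k => if k = i then n₀ else g' k, fun j => ?_⟩
    have hrw : wsum (fun k => decide ((if k = i then n₀ else g' k) = j)) (i+1) xs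
        = wsum (fun k => decide (g' k = j)) (i+1) xs := by
      refine wsum_congr xs (i+1) (fun k hk => ?_)
      have hk' : k ≠ i := by omega
      simp [hk']
    have hset : ∀ j, (Ys.set n₀ (Y.erase x)).getD j [] =
        if n₀ = j then Y.erase x else Ys.getD j [] := by
      intro j
      by_cases hj : n₀ = j
      · subst hj
        rw [if_pos rfl, List.getD_eq_getElem?_getD, List.getElem?_set_self hn₀lt]
        rfl
      · rw [if_neg hj, List.getD_eq_getElem?_getD, List.getElem?_set_ne hj,
          ← List.getD_eq_getElem?_getD]
    have hw : wsum (fun k => decide ((if k = i then n₀ else g' k) = j)) i (x :: xs)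
        = (if n₀ = j then x else 0)
          + wsum (fun k => decide (g' k = j)) (i+1) xs := by
      simp only [wsum, hrw]
      by_cases hj : n₀ = j <;> simp [hj]
    rw [hw]
    by_cases hj : n₀ = j
    · subst hj
      rw [if_pos rfl]
      have h1 := hg' n₀
      rw [hset, if_pos rfl] at h1
      have hYeq : Ys.getD n₀ [] = Y := by rw [List.getD_eq_getElem _ _ hn₀lt, hn₀]
      have hsum' : x + (Y.erase x).sum = Y.sum := ((List.perm_cons_erase hxY).sum_eq).symm
      rw [hYeq]
      omega
    · rw [if_neg hj]
      have h1 := hg' j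
      rw [hset, if_neg hj] at h1
      omega

lemma V_chain : ∀ (n : ℕ) (ts : List RTree), RTree.verts (chain n ts) =
    (List.range (n+1)).map (fun j => List.replicate j 0) ++
      (RTree.vertsAux 0 ts).map (fun w => List.replicate n 0 ++ w)
  | 0, ts => by simp [chain, RTree.verts, List.range_succ]
  | n+1, ts => by
    simp only [chain, RTree.verts, RTree.vertsAux, List.append_nil, V_chain n ts,
      List.map_append, List.map_map]
    simp [List.range_succ_eq_map, List.map_map, Function.comp_def, List.replicate_succ]

lemma VA_ne_nil : ∀ (ts : List RTree) (i : ℕ), ∀ w ∈ RTree.vertsAux i ts, w ≠ []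
  | [], i, w, hw => by simp [RTree.vertsAux] at hw
  | t :: ts, i, w, hw => by
    simp only [RTree.vertsAux, List.mem_append, List.mem_map] at hw
    rcases hw with ⟨v, _, rfl⟩ | hw
    · simp
    · exact VA_ne_nil ts (i+1) w hw

lemma VAcount (q : ℕ → Bool) : ∀ (ts : List RTree) (i : ℕ),
    ((RTree.vertsAux i ts).filter (fun v => q (v.headD 0))).length
      = wsum q i (ts.map (fun t => t.verts.length))
  | [], i => by simp [RTree.vertsAux, wsum]
  | t :: ts, i => by
    simp only [RTree.vertsAux, List.filter_append, List.length_append, List.map_cons, wsum,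
      ← VAcount q ts (i+1)]
    congr 1
    rw [List.filter_map]
    have hcomp : ((fun v => q (List.headD v 0)) ∘ (fun v => i :: v)) = fun _ => q i := by
      funext v; simp
    rw [hcomp]
    cases hqi : q i
    · simp
    · simp

lemma chain_nil_verts_length (m : ℕ) : ((chain m []).verts).length = m + 1 := by
  rw [V_chain]
  simp [RTree.vertsAux]

end Aux

/-- Forward direction of the 3-partition reduction: a valid 3-partition
of `xs` into sets of sum `S` yields a layout of the reduction tree into
blocks of size at most `S` in which every root-to-leaf path intersects
at most `2` blocks. -/
theorem stmt12 (S : ℕ) (hS : 1 ≤ S) (xs : List ℕ)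
    (hpos : ∀ x ∈ xs, 0 < x)
    (hsum : xs.sum = (xs.length / 3) * S)
    (Ys : List (List ℕ)) (hlen : Ys.length = xs.length / 3)
    (hperm : Ys.flatten.Perm xs) (hYsum : ∀ Y ∈ Ys, Y.sum = S) :
    ∃ L : List ℕ → ℕ,
      (∀ b : ℕ, blockCount (hardTree S xs) L b ≤ S) ∧
      ∀ p ∈ (hardTree S xs).paths, ((p.inits.map L).dedup).length ≤ 2 := by
  classical
  obtain ⟨g, hg⟩ := partA xs Ys hperm 0
  set L : List ℕ → ℕ := fun v => if v.length < S then 1 else 2 + g (v.getD (S-1) 0) with hLdef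
  have hbound : ∀ j : ℕ, (Ys.getD j []).sum ≤ S := by
    intro j
    by_cases hj : j < Ys.length
    · rw [List.getD_eq_getElem _ _ hj]
      exact le_of_eq (hYsum _ (List.getElem_mem hj))
    · rw [List.getD_eq_default _ _ (not_lt.mp hj)]
      simp
  refine ⟨L, ?_, ?_⟩
  · -- blockCount bound
    intro b
    have hverts : (hardTree S xs).verts =
        ((List.range S).map (fun j => List.replicate j 0)) ++
          (RTree.vertsAux 0 (xs.map fun x => chain (x - 1) [])).map
            (fun w => List.replicate (S-1) 0 ++ w) := by
      rw [hardTree, V_chain]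
      have hSS : S - 1 + 1 = S := by omega
      rw [hSS]
    rw [blockCount, hverts, List.filter_append, List.length_append]
    -- root part
    have hroot : (((List.range S).map (fun j => List.replicate j 0)).filter
        (fun v => decide (L v = b))).length = if b = 1 then S else 0 := by
      have hcongr : ∀ v ∈ (List.range S).map (fun j => List.replicate j 0),
          (decide (L v = b)) = (decide (1 = b)) := by
        intro v hv
        obtain ⟨j, hj, rfl⟩ := List.mem_map.mp hv
        have hjS : j < S := List.mem_range.mp hj
        have hL1 : L (List.replicate j 0) = 1 := by
          simp only [hLdef]
          rw [if_pos]; simpa using hjS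
        rw [hL1]
      rw [List.filter_congr hcongr]
      by_cases hb : b = 1
      · subst hb; simp
      · have hd : (decide (1 = b)) = false := by simpa using (Ne.symm hb)
        simp [hd, hb]
    -- pendant part
    have hne := VA_ne_nil (xs.map fun x => chain (x - 1) []) 0
    have hcongr2 : ∀ w ∈ RTree.vertsAux 0 (xs.map fun x => chain (x - 1) []),
        (decide (L (List.replicate (S-1) 0 ++ w) = b)) = (decide (2 + g (w.headD 0) = b)) := by
      intro w hw
      have hw' : w ≠ [] := hne w hw
      have hlen : ¬ (List.replicate (S-1) 0 ++ w).length < S := by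
        rw [List.length_append, List.length_replicate]
        have hwp : 0 < w.length := List.length_pos_iff.mpr hw'
        omega
      have hgetD : (List.replicate (S-1) 0 ++ w).getD (S-1) 0 = w.headD 0 := by
        rw [List.getD_append_right _ _ _ _ (by simp)]
        simp only [List.length_replicate, Nat.sub_self]
        cases w with
        | nil => simp
        | cons a l => simp
      have hLw : L (List.replicate (S-1) 0 ++ w) = 2 + g (w.headD 0) := by
        simp only [hLdef]
        rw [if_neg hlen, hgetD]
      rw [hLw]
    have hpend : (((RTree.vertsAux 0 (xs.map fun x => chain (x - 1) [])).map
        (fun w => List.replicate (S-1) 0 ++ w)).filter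
          (fun v => decide (L v = b))).length
        = wsum (fun k => decide (2 + g k = b)) 0 xs := by
      rw [List.filter_map, List.length_map]
      rw [show ((fun v => decide (L v = b)) ∘ (fun w => List.replicate (S-1) 0 ++ w))
        = fun w => decide (L (List.replicate (S-1) 0 ++ w) = b) from rfl]
      rw [List.filter_congr hcongr2]
      have hvc := VAcount (fun k => decide (2 + g k = b))
        (xs.map fun x => chain (x - 1) []) 0
      rw [List.map_map] at hvc
      have hxs : (xs.map ((fun t => RTree.verts t |>.length) ∘ fun x => chain (x - 1) []))
          = xs := by
        have := List.map_congr_left (l := xs)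
          (f := ((fun t => RTree.verts t |>.length) ∘ fun x => chain (x - 1) []))
          (g := id) (fun x hx => by
            have hx1 := hpos x hx
            simp [Function.comp, chain_nil_verts_length]
            omega)
        rw [this, List.map_id]
      rw [hxs] at hvc
      exact hvc
    rw [hroot, hpend]
    by_cases hb0 : b < 2
    · have h0 : wsum (fun k => decide (2 + g k = b)) 0 xs = 0 :=
        wsum_false (fun k => decide_eq_false (by omega)) xs 0
      rw [h0]
      by_cases hb1 : b = 1 <;> simp [hb1]
    · push_neg at hb0
      have h1 : (fun k => decide (2 + g k = b)) = (fun k => decide (g k = b - 2)) := by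
        funext k; exact decide_eq_decide.mpr (by omega)
      rw [h1]
      have h2 := hg (b - 2)
      have h3 := hbound (b - 2)
      have hb1 : b ≠ 1 := by omega
      rw [if_neg hb1]
      omega
  · -- path bound
    intro p _
    have key : ∀ a ∈ (p.inits.map L).dedup, a = 1 ∨ a = 2 + g (p.getD (S-1) 0) := by
      intro a ha
      have ha' := List.mem_dedup.mp ha
      obtain ⟨q, hq, rfl⟩ := List.mem_map.mp ha'
      have hpre : q <+: p := (List.mem_inits _ _).mp hq
      by_cases hlen : q.length < S
      · left; simp only [hLdef]; rw [if_pos hlen]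
      · right
        push_neg at hlen
        have h1 : S - 1 < q.length := by omega
        have h2 : S - 1 < p.length := lt_of_lt_of_le h1 hpre.length_le
        have heq : q.getD (S-1) 0 = p.getD (S-1) 0 := by
          rw [List.getD_eq_getElem _ _ h1, List.getD_eq_getElem _ _ h2]
          exact hpre.getElem h1
        simp only [hLdef]
        rw [if_neg (by omega), heq]
    have hnd := (p.inits.map L).nodup_dedup
    have hsub : ((p.inits.map L).dedup).toFinset ⊆
        {1, 2 + g (p.getD (S-1) 0)} := by
      intro a ha
      rcases key a (List.mem_toFinset.mp ha) with h | h <;> simp [h]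
    calc ((p.inits.map L).dedup).length
        = ((p.inits.map L).dedup).toFinset.card := (List.toFinset_card_of_nodup hnd).symm
      _ ≤ ({1, 2 + g (p.getD (S-1) 0)} : Finset ℕ).card := Finset.card_le_card hsub
      _ ≤ 2 := by
          apply le_trans (Finset.card_insert_le _ _)
          simp
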